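/- Let f : [0,2] → ℝ be a continuous convex function with f(0) = 0, f(2) = 1, f(x) ≥ 0 for all x ∈ [0,2], and satisfying the symmetry f(2 − x) = 1 − x + f(x) for all x ∈ [0,2]. Then for every x ∈ [0,2], f(x) ≥ max(0, (x−1)/2 + f(1)/2, x − 1). In other words, f lies on or above the piecewise linear function f₀ with f₀ = 0 on [0, 1 − f(1)], slope 1/2 on [1 − f(1), 1 + f(1)], and slope 1 on [1 + f(1), 2], which satisfies f₀(0) = 0, f₀(2) = 1, and f₀(1) = f(1)/2. -/
import Mathlib

/-- let `f : [0,2] → ℝ` be a continuous convex function with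
`f 0 = 0`, `f 2 = 1`, `f ≥ 0`, satisfying the symmetry
`f (2 − x) = 1 − x + f x` for all `x ∈ [0,2]`.  Then
`f x ≥ max (0, (x−1)/2 + f 1 / 2, x − 1)` for every `x ∈ [0,2]`. -/
theorem stmt8 (f : ℝ → ℝ)
    (hconv : ConvexOn ℝ (Set.Icc 0 2) f)
    (hcont : ContinuousOn f (Set.Icc 0 2))
    (h0 : f 0 = 0) (h2 : f 2 = 1)
    (hnonneg : ∀ x ∈ Set.Icc (0 : ℝ) 2, 0 ≤ f x)
    (hsymm : ∀ x ∈ Set.Icc (0 : ℝ) 2, f (2 - x) = 1 - x + f x) :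
    ∀ x ∈ Set.Icc (0 : ℝ) 2,
      max 0 (max ((x - 1) / 2 + f 1 / 2) (x - 1)) ≤ f x := by
  intro x hx
  obtain ⟨hx0, hx2⟩ := hx
  have hmem : (2 - x) ∈ Set.Icc (0:ℝ) 2 := ⟨by linarith, by linarith⟩
  have hs := hsymm x ⟨hx0, hx2⟩
  have hn2 := hnonneg (2 - x) hmem
  have hn := hnonneg x ⟨hx0, hx2⟩
  have hn1 := hnonneg 1 ⟨by norm_num, by norm_num⟩
  have hmid := hconv.2 (Set.mem_Icc.mpr ⟨hx0, hx2⟩) hmem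
    (by norm_num : (0:ℝ) ≤ 1/2) (by norm_num : (0:ℝ) ≤ 1/2) (by norm_num)
  simp only [smul_eq_mul] at hmid
  have heq : (1/2 : ℝ) * x + (1/2 : ℝ) * (2 - x) = 1 := by ring
  rw [heq] at hmid
  refine max_le hn (max_le ?_ ?_) <;> linarith
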